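/- Let 1 ≤ k ≤ n be integers with C(n,k) ≥ 4^{k-1}. Then F(n,k) ≤ C(C(n,k), 4^{k-1})·(2^k + 1)^{4^{k-1}}, where C(·,·) denotes the binomial coefficient. -/

import Mathlib

/-- Negate the `i`-th coordinate of a vertex `x` of the hypercube `{-1,1}^n`
(coordinates are `ℤˣ = {-1,1}`). -/
def flipCoord {n : ℕ} (x : Fin n → ℤˣ) (i : Fin n) : Fin n → ℤˣ :=
  Function.update x i (-(x i))

/-- `f` is a `k`-function: every vertex has exactly `k` neighbours where `f` differs. -/
def IsKFun {n : ℕ} {β : Type*} (k : ℕ) (f : (Fin n → ℤˣ) → β) : Prop :=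
  ∀ x, Set.ncard {i : Fin n | f (flipCoord x i) ≠ f x} = k

/-- `F n k`: the number of `k`-functions on `Q_n`. -/
noncomputable def numKFun (n k : ℕ) : ℕ :=
  Nat.card {f : (Fin n → ℤˣ) → ℤˣ // IsKFun k f}

namespace KFunAux
open Finset

lemma umul (u : ℤˣ) : (u : ℤ) * u = 1 := by
  rw [← Units.val_mul, Int.units_mul_self u, Units.val_one]

lemma flip_apply {n : ℕ} (x : Fin n → ℤˣ) (j i : Fin n) :
    flipCoord x j i = if i = j then -(x j) else x i := by
  simp [flipCoord, Function.update_apply]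

lemma flip_flip {n : ℕ} (x : Fin n → ℤˣ) (j : Fin n) :
    flipCoord (flipCoord x j) j = x := by
  funext i
  rcases eq_or_ne i j with rfl | h
  · simp [flip_apply]
  · simp [flip_apply, h]

lemma flip_ne {n : ℕ} (x : Fin n → ℤˣ) (j : Fin n) : flipCoord x j ≠ x := by
  intro h
  have h2 := congrFun h j
  rw [flip_apply, if_pos rfl] at h2
  have h3 := congrArg Units.val h2
  have h4 : ((x j : ℤ)) ≠ 0 := Units.ne_zero _
  simp only [Units.val_neg] at h3
  omega

/-- product over U flips sign when flipping a coordinate in U -/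
lemma prod_flip {n : ℕ} (x : Fin n → ℤˣ) {U : Finset (Fin n)} {j : Fin n} (hj : j ∈ U) :
    ∏ i ∈ U, ((flipCoord x j i : ℤ)) = -∏ i ∈ U, (x i : ℤ) := by
  have h1 : (fun i => ((flipCoord x j i : ℤ))) = Function.update (fun i => (x i : ℤ)) j (-(x j : ℤ)) := by
    funext i
    rcases eq_or_ne i j with rfl | h
    · simp [flip_apply, Function.update_apply]
    · simp [flip_apply, Function.update_apply, h]
  calc ∏ i ∈ U, ((flipCoord x j i : ℤ))
      = ∏ i ∈ U, Function.update (fun i => (x i : ℤ)) j (-(x j : ℤ)) i := by rw [h1]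
    _ = (-(x j : ℤ)) * ∏ i ∈ U \ {j}, (x i : ℤ) := Finset.prod_update_of_mem hj _ _
    _ = -((x j : ℤ) * ∏ i ∈ U.erase j, (x i : ℤ)) := by rw [neg_mul, Finset.erase_eq]
    _ = -∏ i ∈ U, (x i : ℤ) := congrArg Neg.neg (Finset.mul_prod_erase U (fun i => ((x i : ℤ))) hj)

/-- sums of products over a flip-closed finset vanish -/
lemma sum_prod_eq_zero {n : ℕ} {s : Finset (Fin n → ℤˣ)} {U : Finset (Fin n)} {j : Fin n}
    (hj : j ∈ U) (hs : ∀ x ∈ s, flipCoord x j ∈ s) :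
    ∑ x ∈ s, ∏ i ∈ U, (x i : ℤ) = 0 := by
  refine Finset.sum_involution (fun x _ => flipCoord x j) ?_ ?_ (fun x hx => hs x hx) ?_
  · intro x _; rw [prod_flip x hj]; ring
  · intro x _ _; exact flip_ne x j
  · intro x _; exact flip_flip x j

end KFunAux

namespace KFunAux
open Finset

variable {n : ℕ}

def chi (S : Finset (Fin n)) (x : Fin n → ℤˣ) : ℤ := ∏ i ∈ S, (x i : ℤ)

lemma mul_units (u v : ℤˣ) : (u : ℤ) * v = if u = v then 1 else -1 := by
  rcases Int.units_eq_one_or u with rfl | rfl <;>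
    rcases Int.units_eq_one_or v with rfl | rfl <;> simp

lemma chi_mul_self (S : Finset (Fin n)) (x : Fin n → ℤˣ) : chi S x * chi S x = 1 := by
  rw [chi, ← Finset.prod_mul_distrib]
  exact Finset.prod_eq_one (fun i _ => umul (x i))

lemma card_cube : Fintype.card (Fin n → ℤˣ) = 2 ^ n := by
  simp [Fintype.card_fun]

lemma sum_chi (U : Finset (Fin n)) :
    ∑ x : Fin n → ℤˣ, chi U x = if U = ∅ then 2 ^ n else 0 := by
  split_ifs with h
  · subst h
    simp only [chi, Finset.prod_empty]
    rw [Finset.sum_const, Finset.card_univ, card_cube]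
    simp
  · obtain ⟨j, hj⟩ := Finset.nonempty_iff_ne_empty.2 h
    exact sum_prod_eq_zero hj (fun x _ => Finset.mem_univ _)

lemma chi_flip_mem {S : Finset (Fin n)} {i : Fin n} (hi : i ∈ S) (x : Fin n → ℤˣ) :
    chi S (flipCoord x i) = -chi S x := prod_flip x hi

lemma chi_flip_not_mem {S : Finset (Fin n)} {i : Fin n} (hi : i ∉ S) (x : Fin n → ℤˣ) :
    chi S (flipCoord x i) = chi S x := by
  refine Finset.prod_congr rfl (fun j hj => ?_)
  have : j ≠ i := fun h => hi (h ▸ hj)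
  rw [flip_apply, if_neg this]

lemma kernel (x y : Fin n → ℤˣ) :
    ∑ S : Finset (Fin n), chi S x * chi S y = if x = y then 2 ^ n else 0 := by
  have h1 : ∀ S : Finset (Fin n), chi S x * chi S y = ∏ i ∈ S, ((x i : ℤ) * (y i : ℤ)) := by
    intro S; rw [chi, chi, ← Finset.prod_mul_distrib]
  have h2 := Finset.prod_add (fun i => (x i : ℤ) * (y i : ℤ)) (fun _ => (1 : ℤ)) Finset.univ
  simp only [Finset.prod_const_one, mul_one, Finset.powerset_univ] at h2
  calc ∑ S : Finset (Fin n), chi S x * chi S y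
      = ∑ S : Finset (Fin n), ∏ i ∈ S, ((x i : ℤ) * (y i : ℤ)) := by
        exact Finset.sum_congr rfl (fun S _ => h1 S)
    _ = ∏ i : Fin n, ((x i : ℤ) * (y i : ℤ) + 1) := h2.symm
    _ = if x = y then 2 ^ n else 0 := by
        split_ifs with hxy
        · subst hxy
          have h3 : ∀ i ∈ Finset.univ, ((x i : ℤ) * (x i : ℤ) + 1) = 2 := fun i _ => by
            rw [umul]; norm_num
          rw [Finset.prod_congr rfl h3]
          simp
        · obtain ⟨i, hi⟩ : ∃ i, x i ≠ y i := by
            by_contra hc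
            push_neg at hc
            exact hxy (funext hc)
          refine Finset.prod_eq_zero (Finset.mem_univ i) ?_
          rw [mul_units, if_neg hi]
          ring

variable (f : (Fin n → ℤˣ) → ℤˣ)

def Wc (S : Finset (Fin n)) : ℤ := ∑ x : Fin n → ℤˣ, (f x : ℤ) * chi S x

lemma inversion (x : Fin n → ℤˣ) :
    ∑ S : Finset (Fin n), Wc f S * chi S x = 2 ^ n * (f x : ℤ) := by
  calc ∑ S : Finset (Fin n), Wc f S * chi S x
      = ∑ S : Finset (Fin n), ∑ y : Fin n → ℤˣ, (f y : ℤ) * (chi S y * chi S x) := by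
        refine Finset.sum_congr rfl (fun S _ => ?_)
        rw [Wc, Finset.sum_mul]
        exact Finset.sum_congr rfl (fun y _ => by ring)
    _ = ∑ y : Fin n → ℤˣ, (f y : ℤ) * ∑ S : Finset (Fin n), chi S y * chi S x := by
        rw [Finset.sum_comm]
        exact Finset.sum_congr rfl (fun y _ => by rw [Finset.mul_sum])
    _ = ∑ y : Fin n → ℤˣ, (f y : ℤ) * (if y = x then (2:ℤ) ^ n else 0) := by
        exact Finset.sum_congr rfl (fun y _ => by rw [kernel])
    _ = 2 ^ n * (f x : ℤ) := by
        simp [mul_ite, Finset.sum_ite_eq, Finset.sum_ite_eq', mul_comm]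

lemma parseval : ∑ S : Finset (Fin n), Wc f S * Wc f S = 2 ^ n * 2 ^ n := by
  calc ∑ S : Finset (Fin n), Wc f S * Wc f S
      = ∑ S : Finset (Fin n), ∑ x : Fin n → ℤˣ, ∑ y : Fin n → ℤˣ,
          ((f x : ℤ) * (f y : ℤ)) * (chi S x * chi S y) := by
        refine Finset.sum_congr rfl (fun S _ => ?_)
        rw [Wc, Finset.sum_mul_sum]
        exact Finset.sum_congr rfl (fun x _ => Finset.sum_congr rfl (fun y _ => by ring))
    _ = ∑ x : Fin n → ℤˣ, ∑ y : Fin n → ℤˣ,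
          ((f x : ℤ) * (f y : ℤ)) * ∑ S : Finset (Fin n), chi S x * chi S y := by
        rw [Finset.sum_comm]
        refine Finset.sum_congr rfl (fun x _ => ?_)
        rw [Finset.sum_comm]
        exact Finset.sum_congr rfl (fun y _ => by rw [Finset.mul_sum])
    _ = ∑ x : Fin n → ℤˣ, ∑ y : Fin n → ℤˣ,
          ((f x : ℤ) * (f y : ℤ)) * (if x = y then (2:ℤ) ^ n else 0) := by
        exact Finset.sum_congr rfl (fun x _ => Finset.sum_congr rfl (fun y _ => by rw [kernel]))
    _ = ∑ x : Fin n → ℤˣ, (2:ℤ) ^ n := by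
        refine Finset.sum_congr rfl (fun x _ => ?_)
        simp [mul_ite, Finset.sum_ite_eq, Finset.sum_ite_eq', umul]
    _ = 2 ^ n * 2 ^ n := by
        rw [Finset.sum_const, Finset.card_univ, card_cube]
        simp [mul_comm]
end KFunAux
namespace KFunAux
open Finset

variable {n k : ℕ} {f : (Fin n → ℤˣ) → ℤˣ}

def flipEquiv (i : Fin n) : (Fin n → ℤˣ) ≃ (Fin n → ℤˣ) :=
  ⟨fun x => flipCoord x i, fun x => flipCoord x i, fun x => flip_flip x i, fun x => flip_flip x i⟩

lemma sens (hf : IsKFun k f) (x : Fin n → ℤˣ) :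
    ∑ i : Fin n, ((f (flipCoord x i) : ℤ)) = ((n : ℤ) - 2 * k) * (f x : ℤ) := by
  have hcard : (Finset.univ.filter (fun i => f (flipCoord x i) ≠ f x)).card = k := by
    have h := hf x
    rwa [Set.ncard_eq_toFinset_card', Set.toFinset_setOf] at h
  have hsum : ∑ i : Fin n, ((f (flipCoord x i) : ℤ)) * (f x : ℤ) = (n : ℤ) - 2 * k := by
    have h1 : ∀ i : Fin n, ((f (flipCoord x i) : ℤ)) * (f x : ℤ)
        = if f (flipCoord x i) = f x then (1:ℤ) else -1 := fun i => mul_units _ _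
    rw [Finset.sum_congr rfl (fun i _ => h1 i), Finset.sum_ite, Finset.sum_const,
      Finset.sum_const]
    have h2 := Finset.card_filter_add_card_filter_not
      (s := (Finset.univ : Finset (Fin n))) (p := fun i => f (flipCoord x i) = f x)
    rw [Finset.card_univ, Fintype.card_fin] at h2
    have h3 : (Finset.univ.filter (fun i => ¬ f (flipCoord x i) = f x)).card = k := hcard
    have h4 : (Finset.univ.filter (fun i => f (flipCoord x i) = f x)).card = n - k := by omega
    have hkn : k ≤ n := by omega
    rw [h3, h4]
    simp only [nsmul_eq_mul, smul_eq_mul]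
    omega
  have := congrArg (fun t => t * (f x : ℤ)) hsum
  simp only [Finset.sum_mul] at this
  calc ∑ i : Fin n, ((f (flipCoord x i) : ℤ))
      = ∑ i : Fin n, ((f (flipCoord x i) : ℤ)) * (f x : ℤ) * (f x : ℤ) := by
        refine Finset.sum_congr rfl (fun i _ => ?_)
        rw [mul_assoc, umul, mul_one]
    _ = ((n : ℤ) - 2 * k) * (f x : ℤ) := this

lemma vanishing (hf : IsKFun k f) {S : Finset (Fin n)} (hS : S.card ≠ k) : Wc f S = 0 := by
  have way1 : ∑ x : Fin n → ℤˣ, (∑ i : Fin n, ((f (flipCoord x i) : ℤ))) * chi S x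
      = ((n : ℤ) - 2 * k) * Wc f S := by
    rw [Wc, Finset.mul_sum]
    refine Finset.sum_congr rfl (fun x _ => ?_)
    rw [sens hf x]
    ring
  have hterm : ∀ i : Fin n, ∑ x : Fin n → ℤˣ, ((f (flipCoord x i) : ℤ)) * chi S x
      = (if i ∈ S then -1 else 1) * Wc f S := by
    intro i
    have reidx : ∑ x : Fin n → ℤˣ, ((f (flipCoord x i) : ℤ)) * chi S x
        = ∑ y : Fin n → ℤˣ, ((f y : ℤ)) * chi S (flipCoord y i) := by
      have := Equiv.sum_comp (flipEquiv (n := n) i)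
        (fun y => ((f y : ℤ)) * chi S (flipCoord y i))
      rw [← this]
      refine Finset.sum_congr rfl (fun x _ => ?_)
      simp only [flipEquiv, Equiv.coe_fn_mk]
      rw [flip_flip]
    rw [reidx]
    split_ifs with hi
    · rw [neg_one_mul, Wc, ← Finset.sum_neg_distrib]
      refine Finset.sum_congr rfl (fun y _ => ?_)
      rw [chi_flip_mem hi]
      ring
    · rw [one_mul, Wc]
      refine Finset.sum_congr rfl (fun y _ => ?_)
      rw [chi_flip_not_mem hi]
  have way2 : ∑ x : Fin n → ℤˣ, (∑ i : Fin n, ((f (flipCoord x i) : ℤ))) * chi S x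
      = ((n : ℤ) - 2 * S.card) * Wc f S := by
    calc ∑ x : Fin n → ℤˣ, (∑ i : Fin n, ((f (flipCoord x i) : ℤ))) * chi S x
        = ∑ i : Fin n, ∑ x : Fin n → ℤˣ, ((f (flipCoord x i) : ℤ)) * chi S x := by
          rw [Finset.sum_comm]
          exact Finset.sum_congr rfl (fun x _ => Finset.sum_mul _ _ _)
      _ = ∑ i : Fin n, (if i ∈ S then (-1:ℤ) else 1) * Wc f S := by
          exact Finset.sum_congr rfl (fun i _ => hterm i)
      _ = (∑ i : Fin n, (if i ∈ S then (-1:ℤ) else 1)) * Wc f S := (Finset.sum_mul _ _ _).symm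
      _ = ((n : ℤ) - 2 * S.card) * Wc f S := by
          congr 1
          rw [Finset.sum_ite, Finset.sum_const, Finset.sum_const]
          have h2 := Finset.card_filter_add_card_filter_not
            (s := (Finset.univ : Finset (Fin n))) (p := fun i => i ∈ S)
          rw [Finset.card_univ, Fintype.card_fin] at h2
          have h3 : (Finset.univ.filter (fun i => i ∈ S)).card = S.card := by
            congr 1
            ext i
            simp
          have hle : S.card ≤ n := by
            simpa using S.card_le_univ
          rw [h3] at h2 ⊢
          have h4 : (Finset.univ.filter (fun i => ¬ i ∈ S)).card = n - S.card := by omega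
          rw [h4]
          simp only [nsmul_eq_mul, smul_eq_mul]
          omega
  have heq : ((n : ℤ) - 2 * k) * Wc f S = ((n : ℤ) - 2 * S.card) * Wc f S := by
    rw [← way1, ← way2]
  have hne : ((n : ℤ) - 2 * S.card) - ((n : ℤ) - 2 * k) ≠ 0 := by
    intro h
    apply hS
    have : (S.card : ℤ) = k := by linarith
    exact_mod_cast this
  have : (((n : ℤ) - 2 * S.card) - ((n : ℤ) - 2 * k)) * Wc f S = 0 := by
    rw [sub_mul, heq]
    ring
  rcases mul_eq_zero.1 this with h | h
  · exact absurd h hne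
  · exact h

end KFunAux
namespace KFunAux
open Finset

variable {n k : ℕ} {f : (Fin n → ℤˣ) → ℤˣ}

lemma pm_one (u : ℤˣ) : (u : ℤ) = 1 ∨ (u : ℤ) = -1 := by
  rcases Int.units_eq_one_or u with rfl | rfl <;> simp

lemma chi_pm_one (S : Finset (Fin n)) (x : Fin n → ℤˣ) : chi S x = 1 ∨ chi S x = -1 :=
  mul_self_eq_one_iff.1 (chi_mul_self S x)

lemma granularity (hf : IsKFun k f) (hk : 1 ≤ k) {S : Finset (Fin n)} (hS : S.card = k) :
    ((2:ℤ) ^ (n - k + 1)) ∣ Wc f S := by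
  have hkn : k ≤ n := by
    rw [← hS]; simpa using S.card_le_univ
  classical
  set A : Finset (Fin n → ℤˣ) :=
    Fintype.piFinset (fun i => if i ∈ S then (Finset.univ : Finset ℤˣ) else {1}) with hA
  have memA : ∀ x ∈ A, ∀ i, i ∉ S → x i = 1 := by
    intro x hx i hi
    have := Fintype.mem_piFinset.1 hx i
    rwa [if_neg hi, Finset.mem_singleton] at this
  have flipA : ∀ j ∈ S, ∀ x ∈ A, flipCoord x j ∈ A := by
    intro j hj x hx
    rw [Fintype.mem_piFinset]
    intro i
    by_cases hi : i ∈ S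
    · rw [if_pos hi]; exact Finset.mem_univ _
    · rw [if_neg hi, Finset.mem_singleton, flip_apply, if_neg (by rintro rfl; exact hi hj)]
      exact memA x hx i hi
  have cardA : A.card = 2 ^ k := by
    rw [hA, Fintype.card_piFinset]
    have : ∀ i : Fin n, ((if i ∈ S then (Finset.univ : Finset ℤˣ) else {1}).card)
        = if i ∈ S then 2 else 1 := by
      intro i; split_ifs <;> simp [Finset.card_univ]
    rw [Finset.prod_congr rfl (fun i _ => this i)]
    rw [Finset.prod_ite_mem, Finset.univ_inter, Finset.prod_const, hS]
  have chiA : ∀ x ∈ A, ∀ T : Finset (Fin n), chi T x = chi (T ∩ S) x := by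
    intro x hx T
    have : ∀ i ∈ T, ((x i : ℤ)) = if i ∈ S then (x i : ℤ) else 1 := by
      intro i _
      split_ifs with h
      · rfl
      · rw [memA x hx i h]; rfl
    rw [chi, Finset.prod_congr rfl this, Finset.prod_ite_mem]
    rfl
  have prodTS : ∀ x ∈ A, ∀ T : Finset (Fin n), chi T x * chi S x = chi (S \ T) x := by
    intro x hx T
    rw [chiA x hx T]
    have hsplit : chi S x = chi (S \ T) x * chi (S ∩ T) x := by
      rw [chi, chi, chi, ← Finset.prod_union (Finset.disjoint_sdiff_inter S T)]
      congr 1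
      rw [Finset.sdiff_union_inter]
    rw [hsplit, Finset.inter_comm T S, ← mul_assoc, mul_comm (chi (S ∩ T) x) (chi (S \ T) x),
      mul_assoc, chi_mul_self, mul_one]
  have SAT : ∀ T : Finset (Fin n),
      ∑ x ∈ A, chi T x * chi S x = if S ⊆ T then (2:ℤ) ^ k else 0 := by
    intro T
    rw [Finset.sum_congr rfl (fun x hx => prodTS x hx T)]
    split_ifs with hsub
    · have : S \ T = ∅ := Finset.sdiff_eq_empty_iff_subset.2 hsub
      rw [this]
      rw [show chi (∅ : Finset (Fin n)) = fun _ => (1 : ℤ) from funext fun x => Finset.prod_empty]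
      rw [Finset.sum_const, cardA]
      simp
    · obtain ⟨j, hj⟩ : (S \ T).Nonempty := by
        rw [Finset.sdiff_nonempty]; exact hsub
      exact sum_prod_eq_zero hj (flipA j (Finset.mem_sdiff.1 hj).1)
  set J : ℤ := ∑ x ∈ A, (f x : ℤ) * chi S x with hJ
  have h2n : 2 ^ n * J = 2 ^ k * Wc f S := by
    calc (2:ℤ) ^ n * J = ∑ x ∈ A, (2 ^ n * (f x : ℤ)) * chi S x := by
          rw [hJ, Finset.mul_sum]
          exact Finset.sum_congr rfl (fun x _ => by ring)
      _ = ∑ x ∈ A, (∑ T : Finset (Fin n), Wc f T * chi T x) * chi S x := by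
          exact Finset.sum_congr rfl (fun x _ => by rw [inversion])
      _ = ∑ x ∈ A, ∑ T : Finset (Fin n), Wc f T * (chi T x * chi S x) := by
          refine Finset.sum_congr rfl (fun x _ => ?_)
          rw [Finset.sum_mul]
          exact Finset.sum_congr rfl (fun T _ => by ring)
      _ = ∑ T : Finset (Fin n), Wc f T * ∑ x ∈ A, chi T x * chi S x := by
          rw [Finset.sum_comm]
          exact Finset.sum_congr rfl (fun T _ => (Finset.mul_sum _ _ _).symm)
      _ = ∑ T : Finset (Fin n), Wc f T * (if S ⊆ T then (2:ℤ) ^ k else 0) := by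
          exact Finset.sum_congr rfl (fun T _ => by rw [SAT])
      _ = 2 ^ k * Wc f S := by
          rw [Finset.sum_eq_single S]
          · rw [if_pos (Finset.Subset.refl S)]
            ring
          · intro T _ hTS
            split_ifs with hsub
            · by_cases hck : T.card = k
              · have : S = T := Finset.eq_of_subset_of_card_le hsub (by omega)
                exact absurd this.symm hTS
              · rw [vanishing hf hck, zero_mul]
            · rw [mul_zero]
          · intro h
            exact absurd (Finset.mem_univ S) h
  have heven : (2:ℤ) ∣ J := by
    have hm : J % 2 = 0 := by
      rw [hJ, Finset.sum_int_mod]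
      have : ∀ x ∈ A, ((f x : ℤ) * chi S x) % 2 = 1 := by
        intro x _
        rcases pm_one (f x) with h | h <;> rcases chi_pm_one S x with h2 | h2 <;>
          rw [h, h2] <;> decide
      rw [Finset.sum_congr rfl this, Finset.sum_const, cardA]
      simp only [nsmul_eq_mul, mul_one]
      have : ((2:ℤ) ^ k) % 2 = 0 := by
        have h5 : (2:ℤ) ^ k = 2 * 2 ^ (k - 1) := by
          rw [← pow_succ']
          congr 1
          omega
        omega
      push_cast
      omega
    omega
  obtain ⟨m, hm⟩ := heven
  refine ⟨m, ?_⟩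
  have hpow : (2:ℤ) ^ n * 2 = 2 ^ k * 2 ^ (n - k + 1) := by
    rw [← pow_succ, ← pow_add]
    congr 1
    omega
  have : (2:ℤ) ^ k * Wc f S = 2 ^ k * (2 ^ (n - k + 1) * m) := by
    rw [← h2n, hm]
    rw [← mul_assoc, ← mul_assoc, hpow]
  exact mul_left_cancel₀ (pow_ne_zero k two_ne_zero) this

end KFunAux
namespace KFunAux
open Finset

variable {n k : ℕ} {f : (Fin n → ℤˣ) → ℤˣ}

noncomputable def cf (k : ℕ) (f : (Fin n → ℤˣ) → ℤˣ) : Finset (Fin n) → ℤ :=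
  fun S => Wc f S / 2 ^ (n - k + 1)

lemma cf_spec (hf : IsKFun k f) (hk : 1 ≤ k) {S : Finset (Fin n)} (hS : S.card = k) :
    Wc f S = 2 ^ (n - k + 1) * cf k f S :=
  (Int.mul_ediv_cancel' (granularity hf hk hS)).symm

lemma parsevalU (hf : IsKFun k f) (hk : 1 ≤ k) (hkn : k ≤ n) :
    ∑ S ∈ Finset.powersetCard k (Finset.univ : Finset (Fin n)),
      cf k f S * cf k f S = 4 ^ (k - 1) := by
  set U := Finset.powersetCard k (Finset.univ : Finset (Fin n)) with hU
  have h1 : ∑ S ∈ U, Wc f S * Wc f S = 2 ^ n * 2 ^ n := by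
    rw [← parseval f]
    refine Finset.sum_subset (Finset.subset_univ U) (fun S _ hSU => ?_)
    have : S.card ≠ k := fun hc => hSU (Finset.mem_powersetCard_univ.2 hc)
    rw [vanishing hf this, mul_zero]
  have h2 : ∑ S ∈ U, Wc f S * Wc f S
      = 4 ^ (n - k + 1) * ∑ S ∈ U, cf k f S * cf k f S := by
    rw [Finset.mul_sum]
    refine Finset.sum_congr rfl (fun S hS => ?_)
    rw [cf_spec hf hk (Finset.mem_powersetCard_univ.1 hS)]
    have : (4:ℤ) ^ (n - k + 1) = 2 ^ (n - k + 1) * 2 ^ (n - k + 1) := by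
      rw [← mul_pow]; norm_num
    rw [this]; ring
  have h3 : (2:ℤ) ^ n * 2 ^ n = 4 ^ (n - k + 1) * 4 ^ (k - 1) := by
    rw [← mul_pow, ← pow_add]
    norm_num
    omega
  have h4 : (4:ℤ) ^ (n - k + 1) * ∑ S ∈ U, cf k f S * cf k f S
      = 4 ^ (n - k + 1) * 4 ^ (k - 1) := by rw [← h2, h1, h3]
  exact mul_left_cancel₀ (pow_ne_zero _ (by norm_num)) h4

lemma support_card_le (hf : IsKFun k f) (hk : 1 ≤ k) (hkn : k ≤ n) :
    ((Finset.powersetCard k (Finset.univ : Finset (Fin n))).filter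
      (fun S => cf k f S ≠ 0)).card ≤ 4 ^ (k - 1) := by
  set U := Finset.powersetCard k (Finset.univ : Finset (Fin n)) with hU
  set D := U.filter (fun S => cf k f S ≠ 0) with hD
  have h1 : (D.card : ℤ) ≤ ∑ S ∈ D, cf k f S * cf k f S := by
    calc (D.card : ℤ) = ∑ _S ∈ D, (1:ℤ) := by rw [Finset.sum_const, nsmul_eq_mul, mul_one]
      _ ≤ ∑ S ∈ D, cf k f S * cf k f S := by
          refine Finset.sum_le_sum (fun S hS => ?_)
          have hne : cf k f S ≠ 0 := (Finset.mem_filter.1 hS).2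
          have : 1 ≤ |cf k f S| := Int.one_le_abs hne
          nlinarith [abs_nonneg (cf k f S), sq_abs (cf k f S)]
  have h2 : ∑ S ∈ D, cf k f S * cf k f S ≤ ∑ S ∈ U, cf k f S * cf k f S := by
    refine Finset.sum_le_sum_of_subset_of_nonneg (Finset.filter_subset _ _) ?_
    intro S _ _
    exact mul_self_nonneg _
  have h3 := parsevalU hf hk hkn
  have : (D.card : ℤ) ≤ 4 ^ (k - 1) := by
    calc (D.card : ℤ) ≤ _ := h1
      _ ≤ _ := h2
      _ = 4 ^ (k - 1) := h3
  exact_mod_cast this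

lemma coeff_bound (hf : IsKFun k f) (hk : 1 ≤ k) (hkn : k ≤ n) {S : Finset (Fin n)}
    (hS : S ∈ Finset.powersetCard k (Finset.univ : Finset (Fin n))) :
    0 ≤ cf k f S + 2 ^ (k - 1) ∧ cf k f S + 2 ^ (k - 1) ≤ 2 ^ k := by
  set U := Finset.powersetCard k (Finset.univ : Finset (Fin n)) with hU
  have h1 : cf k f S * cf k f S ≤ ∑ T ∈ U, cf k f T * cf k f T := by
    exact Finset.single_le_sum (f := fun T => cf k f T * cf k f T)
      (fun T _ => mul_self_nonneg _) hS
  have h2 : cf k f S * cf k f S ≤ 2 ^ (k - 1) * 2 ^ (k - 1) := by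
    have h3 := parsevalU hf hk hkn
    have h4 : (4:ℤ) ^ (k - 1) = 2 ^ (k - 1) * 2 ^ (k - 1) := by
      rw [← mul_pow]; norm_num
    rw [h3, h4] at h1
    exact h1
  have hB : (0:ℤ) < 2 ^ (k - 1) := by positivity
  have h2k : (2:ℤ) ^ k = 2 ^ (k - 1) * 2 := by
    rw [← pow_succ]
    congr 1
    omega
  constructor
  · nlinarith
  · nlinarith

end KFunAux
namespace KFunAux
open Finset

variable {n k : ℕ}

lemma Wc_inj {f1 f2 : (Fin n → ℤˣ) → ℤˣ} (h : ∀ S, Wc f1 S = Wc f2 S) : f1 = f2 := by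
  funext x
  have h1 := inversion f1 x
  have h2 := inversion f2 x
  have h3 : (2:ℤ) ^ n * (f1 x : ℤ) = 2 ^ n * (f2 x : ℤ) := by
    rw [← h1, ← h2]
    exact Finset.sum_congr rfl (fun S _ => by rw [h S])
  have h4 := mul_left_cancel₀ (pow_ne_zero n (two_ne_zero (α := ℤ))) h3
  exact Units.ext h4

lemma encode_card_le {α β : Type*} (U : Finset α) (m B : ℕ)
    (hmU : m ≤ U.card) (c : β → α → ℤ)
    (hsupp : ∀ b, (U.filter (fun S => c b S ≠ 0)).card ≤ m)
    (hbound : ∀ b, ∀ S ∈ U, -(B:ℤ) ≤ c b S ∧ c b S ≤ B)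
    (hinj : ∀ b1 b2, (∀ S ∈ U, c b1 S = c b2 S) → b1 = b2) :
    Nat.card β ≤ U.card.choose m * (2 * B + 1) ^ m := by
  classical
  have hAex : ∀ b : β, ∃ A : Finset α,
      (U.filter (fun S => c b S ≠ 0)) ⊆ A ∧ A ⊆ U ∧ A.card = m :=
    fun b => Finset.exists_subsuperset_card_eq (Finset.filter_subset _ _) (hsupp b) hmU
  choose Af hA1 hA2 hA3 using hAex
  set Ω := ↥(U.powersetCard m) × (Fin m → Fin (2 * B + 1)) with hΩ
  let E : β → Ω := fun b =>
    (⟨Af b, Finset.mem_powersetCard.2 ⟨hA2 b, hA3 b⟩⟩,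
     fun j => ⟨(c b ((Af b).equivFin.symm (Fin.cast (hA3 b).symm j)).1 + B).toNat % (2 * B + 1),
       Nat.mod_lt _ (by omega)⟩)
  let Dec : Ω → (α → ℤ) := fun p S =>
    if h : S ∈ p.1.1
    then ((p.2 (Fin.cast (Finset.mem_powersetCard.1 p.1.2).2 (p.1.1.equivFin ⟨S, h⟩))).1 : ℤ) - B
    else 0
  have hdec : ∀ b : β, ∀ S ∈ U, Dec (E b) S = c b S := by
    intro b S hS
    by_cases h : S ∈ Af b
    · have step1 : Dec (E b) S
          = (((E b).2 (Fin.cast (hA3 b) ((Af b).equivFin ⟨S, h⟩))).1 : ℤ) - B := by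
        simp only [Dec, E]
        rw [dif_pos h]
      rw [step1]
      have harg : Fin.cast (hA3 b).symm (Fin.cast (hA3 b) ((Af b).equivFin ⟨S, h⟩))
          = (Af b).equivFin ⟨S, h⟩ := by
        apply Fin.ext
        simp
      have step2 : ((E b).2 (Fin.cast (hA3 b) ((Af b).equivFin ⟨S, h⟩))).1
          = (c b S + B).toNat % (2 * B + 1) := by
        simp only [E]
        rw [harg, Equiv.symm_apply_apply]
      rw [step2]
      have hb := hbound b S hS
      have hlt : (c b S + B).toNat < 2 * B + 1 := by omega
      rw [Nat.mod_eq_of_lt hlt]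
      omega
    · have hz : c b S = 0 := by
        by_contra hc
        exact h (hA1 b (Finset.mem_filter.2 ⟨hS, hc⟩))
      have : Dec (E b) S = 0 := by
        simp only [Dec, E]
        rw [dif_neg h]
      rw [this, hz]
  have hEinj : Function.Injective E := by
    intro b1 b2 hE
    refine hinj b1 b2 (fun S hS => ?_)
    rw [← hdec b1 S hS, ← hdec b2 S hS, hE]
  calc Nat.card β ≤ Nat.card Ω := Nat.card_le_card_of_injective E hEinj
    _ = U.card.choose m * (2 * B + 1) ^ m := by
        rw [hΩ, Nat.card_eq_fintype_card, Fintype.card_prod, Fintype.card_coe,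
          Finset.card_powersetCard, Fintype.card_fun, Fintype.card_fin, Fintype.card_fin]

end KFunAux

/-- `F(n,k) ≤ C(C(n,k), 4^(k-1)) · (2^k + 1)^(4^(k-1))` when `C(n,k) ≥ 4^(k-1)`. -/
theorem numKFun_upper (n k : ℕ) (hk : 1 ≤ k) (hkn : k ≤ n)
    (hch : 4 ^ (k - 1) ≤ n.choose k) :
    numKFun n k ≤ (n.choose k).choose (4 ^ (k - 1)) * (2 ^ k + 1) ^ 4 ^ (k - 1) := by
  classical
  open KFunAux in
  have hUcard : (Finset.powersetCard k (Finset.univ : Finset (Fin n))).card = n.choose k := by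
    rw [Finset.card_powersetCard, Finset.card_univ, Fintype.card_fin]
  have h2k : 2 * 2 ^ (k - 1) = 2 ^ k := by
    rw [← pow_succ']
    congr 1
    omega
  have main := KFunAux.encode_card_le
    (U := Finset.powersetCard k (Finset.univ : Finset (Fin n)))
    (m := 4 ^ (k - 1)) (B := 2 ^ (k - 1))
    (by rw [hUcard]; exact hch)
    (fun fs : {f : (Fin n → ℤˣ) → ℤˣ // IsKFun k f} => KFunAux.cf k fs.1)
    (fun fs => KFunAux.support_card_le fs.2 hk hkn)
    (fun fs S hS => by
      beta_reduce
      have hb := KFunAux.coeff_bound fs.2 hk hkn hS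
      have h2kZ : (2:ℤ) ^ k = 2 * 2 ^ (k - 1) := by
        rw [← pow_succ']
        congr 1
        omega
      push_cast
      constructor
      · linarith [hb.1]
      · linarith [hb.2])
    (fun fs1 fs2 hcc => by
      beta_reduce at hcc
      refine Subtype.ext (KFunAux.Wc_inj (fun S => ?_))
      by_cases hcard : S.card = k
      · have hSU : S ∈ Finset.powersetCard k (Finset.univ : Finset (Fin n)) :=
          Finset.mem_powersetCard_univ.2 hcard
        rw [KFunAux.cf_spec fs1.2 hk hcard, KFunAux.cf_spec fs2.2 hk hcard, hcc S hSU]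
      · rw [KFunAux.vanishing fs1.2 hcard, KFunAux.vanishing fs2.2 hcard])
  rw [hUcard, h2k] at main
  exact main
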